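/- Let d ≥ 2 and let B > 0 be a constant such that for every n ≥ d and every function f : {-1,1}^n → ℝ, inf_{g ∈ P_{>d}^n} ‖f − g‖_1 ≤ B · (Σ_{|S| ≤ d} |f̂(S)|^{2d/(d−1)})^{(d−1)/(2d)}. Then for every n ≥ d, every function h : {-1,1}^n → ℝ of degree at most d satisfies the discrete Bohnenblust–Hille inequality (Σ_{S ⊆ {1,…,n}} |ĥ(S)|^{2d/(d+1)})^{(d+1)/(2d)} ≤ B ‖h‖_∞. -/
import Mathlib


open Finset
open scoped ENNReal

noncomputable section

/-- The Walsh function `w_S` on the discrete cube `{-1,1}^n`, where a point of the cube is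
encoded as `x : Fin n → Bool`, a coordinate `b : Bool` representing the real number
`if b then 1 else -1`. -/
def walsh (n : ℕ) (S : Finset (Fin n)) (x : Fin n → Bool) : ℝ :=
  ∏ i ∈ S, (if x i then (1 : ℝ) else -1)

/-- The Fourier--Walsh coefficient `f̂(S) = E[f ⬝ w_S]`. -/
def walshCoeff {n : ℕ} (f : (Fin n → Bool) → ℝ) (S : Finset (Fin n)) : ℝ :=
  (∑ x : Fin n → Bool, f x * walsh n S x) / 2 ^ n

/-- The mean `E f` of `f` with respect to the uniform probability measure on the cube. -/
def cubeMean {n : ℕ} (f : (Fin n → Bool) → ℝ) : ℝ :=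
  (∑ x : Fin n → Bool, f x) / 2 ^ n

/-- The `L_r` norm (`r ∈ [1,∞]`, encoded as `r : ℝ≥0∞`) of `f : {-1,1}^n → ℝ` with respect to
the uniform probability measure; `r = ∞` gives the sup norm. -/
def cubeNorm {n : ℕ} (r : ℝ≥0∞) (f : (Fin n → Bool) → ℝ) : ℝ :=
  if r = ⊤ then Finset.univ.sup' Finset.univ_nonempty (fun x => |f x|)
  else ((∑ x : Fin n → Bool, |f x| ^ r.toReal) / 2 ^ n) ^ (1 / r.toReal)

/-- `f ∈ 𝒫_I^n`: the Fourier--Walsh spectrum of `f` is contained in `I`. -/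
def spectrumIn {n : ℕ} (f : (Fin n → Bool) → ℝ) (I : Set ℕ) : Prop :=
  ∀ S : Finset (Fin n), S.card ∉ I → walshCoeff f S = 0

/-- The `L_r` distance of `f` from the tail space `𝒫_{>k}^n`. -/
def distFromTail {n : ℕ} (k : ℕ) (r : ℝ≥0∞) (f : (Fin n → Bool) → ℝ) : ℝ :=
  sInf {t : ℝ | ∃ g : (Fin n → Bool) → ℝ,
    spectrumIn g {j | k < j} ∧ t = cubeNorm r (fun x => f x - g x)}

/-- The coefficient `c(k,ℓ)` of `x^ℓ` in the `k`-th Chebyshev polynomial of the first kind. -/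
def chebC (k ℓ : ℕ) : ℝ := (Polynomial.Chebyshev.T ℝ k).coeff ℓ

/-- The modified Chebyshev coefficient `c̃(k,ℓ)`. -/
def chebCt (k ℓ : ℕ) : ℝ := if Even (k - ℓ) then chebC k ℓ else chebC (k - 1) ℓ

/-- The `ℓ`-th elementary symmetric multilinear polynomial on `{-1,1}^n`. -/
def elemSymPoly (n ℓ : ℕ) (x : Fin n → Bool) : ℝ :=
  ∑ S ∈ Finset.powersetCard ℓ (Finset.univ : Finset (Fin n)), walsh n S x

/-- The level-`ℓ` Rademacher projection `Rad_ℓ f`. -/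
def radProj {n : ℕ} (ℓ : ℕ) (f : (Fin n → Bool) → ℝ) (x : Fin n → Bool) : ℝ :=
  ∑ S ∈ Finset.powersetCard ℓ (Finset.univ : Finset (Fin n)), walshCoeff f S * walsh n S x

-- helper : sum vanishes under sign-reversing equiv
private lemma sum_neg_equiv {α : Type*} [Fintype α] (e : α ≃ α) (f : α → ℝ)
    (h : ∀ a, f (e a) = - f a) : ∑ a, f a = 0 := by
  have h2 := Equiv.sum_comp e f
  simp only [h] at h2
  rw [Finset.sum_neg_distrib] at h2
  linarith

private lemma walsh_sq {n : ℕ} (S : Finset (Fin n)) (x : Fin n → Bool) :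
    walsh n S x * walsh n S x = 1 := by
  unfold walsh
  rw [← Finset.prod_mul_distrib]
  apply Finset.prod_eq_one
  intro i _
  cases x i <;> norm_num

private def flipEquiv (n : ℕ) (i : Fin n) : (Fin n → Bool) ≃ (Fin n → Bool) :=
  Function.Involutive.toPerm (fun x => Function.update x i (!x i)) (by
    intro x
    funext j
    by_cases hj : j = i
    · subst hj; simp
    · simp [Function.update_of_ne hj])

private lemma walsh_update {n : ℕ} (S : Finset (Fin n)) (x : Fin n → Bool) (i : Fin n) :
    walsh n S (Function.update x i (!x i)) = (if i ∈ S then -1 else 1) * walsh n S x := by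
  by_cases hi : i ∈ S
  · rw [if_pos hi]
    unfold walsh
    rw [← Finset.mul_prod_erase _ _ hi, ← Finset.mul_prod_erase _ (fun j => if x j then (1:ℝ) else -1) hi]
    have h1 : ∀ j ∈ S.erase i,
        (if Function.update x i (!x i) j then (1:ℝ) else -1) = (if x j then 1 else -1) := by
      intro j hj
      rw [Function.update_of_ne (Finset.ne_of_mem_erase hj)]
    rw [Finset.prod_congr rfl h1, Function.update_self]
    cases x i <;> norm_num
  · rw [if_neg hi, one_mul]
    unfold walsh
    apply Finset.prod_congr rfl
    intro j hj
    have : j ≠ i := fun hji => hi (hji ▸ hj)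
    rw [Function.update_of_ne this]

private lemma sum_x_walsh_mul {n : ℕ} (S T : Finset (Fin n)) :
    ∑ x : Fin n → Bool, walsh n S x * walsh n T x = if S = T then (2:ℝ)^n else 0 := by
  by_cases hST : S = T
  · subst hST
    rw [if_pos rfl]
    simp only [walsh_sq]
    simp [Finset.card_univ]
  · rw [if_neg hST]
    obtain ⟨i, hi⟩ := Finset.symmDiff_nonempty.mpr hST
    rw [Finset.mem_symmDiff] at hi
    apply sum_neg_equiv (flipEquiv n i)
    intro x
    have : flipEquiv n i x = Function.update x i (!x i) := rfl
    rw [this, walsh_update, walsh_update]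
    rcases hi with ⟨h1, h2⟩ | ⟨h1, h2⟩ <;> simp [h1, h2]

private def togEquiv (n : ℕ) (i : Fin n) : Finset (Fin n) ≃ Finset (Fin n) :=
  Function.Involutive.toPerm (fun S => if i ∈ S then S.erase i else insert i S) (by
    intro S
    by_cases h : i ∈ S
    · simp [h, Finset.notMem_erase, Finset.insert_erase h]
    · simp [h, Finset.erase_insert h])

private lemma walsh_tog {n : ℕ} (i : Fin n) (S : Finset (Fin n)) (x : Fin n → Bool) :
    walsh n (if i ∈ S then S.erase i else insert i S) x
      = (if x i then (1:ℝ) else -1) * walsh n S x := by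
  by_cases h : i ∈ S
  · rw [if_pos h]
    have h2 : walsh n S x = (if x i then (1:ℝ) else -1) * walsh n (S.erase i) x :=
      (Finset.mul_prod_erase S _ h).symm
    rw [h2, ← mul_assoc]
    have h3 : (if x i then (1:ℝ) else -1) * (if x i then (1:ℝ) else -1) = 1 := by
      cases x i <;> norm_num
    rw [h3, one_mul]
  · rw [if_neg h]
    unfold walsh
    exact Finset.prod_insert h

private lemma sum_S_walsh_mul {n : ℕ} (x y : Fin n → Bool) :
    ∑ S : Finset (Fin n), walsh n S x * walsh n S y = if x = y then (2:ℝ)^n else 0 := by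
  by_cases hxy : x = y
  · subst hxy
    rw [if_pos rfl]
    simp only [walsh_sq]
    simp [Fintype.card_finset]
  · rw [if_neg hxy]
    obtain ⟨i, hi⟩ : ∃ i, x i ≠ y i := by
      by_contra hc; push_neg at hc; exact hxy (funext hc)
    apply sum_neg_equiv (togEquiv n i)
    intro S
    have : togEquiv n i S = if i ∈ S then S.erase i else insert i S := rfl
    rw [this, walsh_tog, walsh_tog]
    cases hx : x i <;> cases hy : y i <;> simp [hx, hy] at hi ⊢

private lemma two_pow_ne {n : ℕ} : ((2:ℝ)^n) ≠ 0 := by positivity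

private lemma expansion {n : ℕ} (g : (Fin n → Bool) → ℝ) (x : Fin n → Bool) :
    ∑ S : Finset (Fin n), walshCoeff g S * walsh n S x = g x := by
  have key : ∀ S : Finset (Fin n), walshCoeff g S * walsh n S x
      = (∑ y : Fin n → Bool, g y * (walsh n S y * walsh n S x)) / 2 ^ n := by
    intro S
    simp only [walshCoeff, div_mul_eq_mul_div, Finset.sum_mul, mul_assoc]
  simp only [key, ← Finset.sum_div]
  rw [Finset.sum_comm]
  have key2 : ∀ y : Fin n → Bool, ∑ S : Finset (Fin n), g y * (walsh n S y * walsh n S x)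
      = g y * (if y = x then (2:ℝ)^n else 0) := by
    intro y; rw [← Finset.mul_sum, sum_S_walsh_mul]
  simp only [key2, mul_ite, mul_zero]
  rw [Finset.sum_ite_eq' Finset.univ x (fun y => g y * (2:ℝ)^n)]
  simp [mul_div_assoc, two_pow_ne]

private lemma parseval {n : ℕ} (g h : (Fin n → Bool) → ℝ) :
    (∑ x : Fin n → Bool, g x * h x) / 2 ^ n
      = ∑ S : Finset (Fin n), walshCoeff g S * walshCoeff h S := by
  have key : ∀ x, g x * h x = ∑ S : Finset (Fin n), walshCoeff g S * (walsh n S x * h x) := by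
    intro x
    conv_lhs => rw [← expansion g x]
    rw [Finset.sum_mul]
    simp [mul_assoc]
  simp only [key]
  rw [Finset.sum_comm, Finset.sum_div]
  apply Finset.sum_congr rfl
  intro S _
  rw [← Finset.mul_sum, mul_div_assoc]
  congr 1
  simp only [walshCoeff]
  congr 1
  apply Finset.sum_congr rfl
  intro x _
  ring

private lemma walshCoeff_sum {n : ℕ} (A : Finset (Finset (Fin n)))
    (a : Finset (Fin n) → ℝ) (T : Finset (Fin n)) :
    walshCoeff (fun x => ∑ S ∈ A, a S * walsh n S x) T = if T ∈ A then a T else 0 := by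
  simp only [walshCoeff, Finset.sum_mul]
  rw [Finset.sum_comm]
  have key : ∀ S : Finset (Fin n), ∑ x : Fin n → Bool, a S * walsh n S x * walsh n T x
      = a S * (if S = T then (2:ℝ)^n else 0) := by
    intro S
    simp only [mul_assoc, ← Finset.mul_sum, sum_x_walsh_mul]
  simp only [key, mul_ite, mul_zero]
  rw [Finset.sum_ite_eq' A T (fun S => a S * (2:ℝ)^n)]
  split <;> simp [mul_div_assoc, two_pow_ne]

private lemma cubeNorm_one {n : ℕ} (φ : (Fin n → Bool) → ℝ) :
    cubeNorm 1 φ = (∑ x : Fin n → Bool, |φ x|) / 2 ^ n := by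
  rw [cubeNorm, if_neg (by simp)]
  simp [ENNReal.toReal_one]

private lemma cubeNorm_one_nonneg {n : ℕ} (φ : (Fin n → Bool) → ℝ) : 0 ≤ cubeNorm 1 φ := by
  rw [cubeNorm_one]
  positivity

private lemma le_cubeNorm_top {n : ℕ} (h : (Fin n → Bool) → ℝ) (x : Fin n → Bool) :
    |h x| ≤ cubeNorm ⊤ h := by
  rw [cubeNorm, if_pos rfl]
  exact Finset.le_sup' (fun x => |h x|) (Finset.mem_univ x)

private lemma abs_mean_le {n : ℕ} (φ h : (Fin n → Bool) → ℝ) :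
    |(∑ x : Fin n → Bool, φ x * h x) / 2 ^ n| ≤ cubeNorm 1 φ * cubeNorm ⊤ h := by
  rw [cubeNorm_one, abs_div, abs_of_pos (show (0:ℝ) < 2^n by positivity),
    div_mul_eq_mul_div]
  apply div_le_div_of_nonneg_right ?_ (by positivity)
  calc |∑ x : Fin n → Bool, φ x * h x| ≤ ∑ x : Fin n → Bool, |φ x * h x| :=
        Finset.abs_sum_le_sum_abs _ _
    _ ≤ ∑ x : Fin n → Bool, |φ x| * cubeNorm ⊤ h := by
        apply Finset.sum_le_sum
        intro x _
        rw [abs_mul]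
        exact mul_le_mul_of_nonneg_left (le_cubeNorm_top h x) (abs_nonneg _)
    _ = (∑ x : Fin n → Bool, |φ x|) * cubeNorm ⊤ h := (Finset.sum_mul _ _ _).symm



/-- the dual inequality with constant `B` implies the discrete
Bohnenblust--Hille inequality with constant `B` for polynomials of degree at most `d ≥ 2`. -/
theorem stmt_14 (d : ℕ) (hd : 2 ≤ d) (B : ℝ) (hB : 0 < B)
    (hdual : ∀ n : ℕ, d ≤ n → ∀ f : (Fin n → Bool) → ℝ,
      distFromTail d 1 f ≤
        B * (∑ S ∈ Finset.filter (fun S : Finset (Fin n) => S.card ≤ d) Finset.univ,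
          |walshCoeff f S| ^ ((2 * (d : ℝ)) / ((d : ℝ) - 1))) ^ (((d : ℝ) - 1) / (2 * (d : ℝ)))) :
    ∀ n : ℕ, d ≤ n → ∀ h : (Fin n → Bool) → ℝ, spectrumIn h {j | j ≤ d} →
      (∑ S : Finset (Fin n), |walshCoeff h S| ^ ((2 * (d : ℝ)) / ((d : ℝ) + 1))) ^
          (((d : ℝ) + 1) / (2 * (d : ℝ))) ≤ B * cubeNorm ⊤ h := by
  intro n hn h hspec
  have hd1 : (1:ℝ) < (d:ℝ) := by exact_mod_cast lt_of_lt_of_le one_lt_two hd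
  have hdpos : (0:ℝ) < 2*(d:ℝ) := by linarith
  have hd1pos : (0:ℝ) < (d:ℝ) - 1 := by linarith
  have hd2pos : (0:ℝ) < (d:ℝ) + 1 := by linarith
  set p : ℝ := (2*(d:ℝ))/((d:ℝ)+1) with hp
  set q : ℝ := (2*(d:ℝ))/((d:ℝ)-1) with hq
  set M := cubeNorm ⊤ h with hMdef
  set Sm := ∑ S : Finset (Fin n), |walshCoeff h S| ^ p with hSmdef
  have hppos : 0 < p := div_pos hdpos hd2pos
  have hpm1 : 0 < p - 1 := by
    have : p - 1 = ((d:ℝ)-1)/((d:ℝ)+1) := by rw [hp]; field_simp; ring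
    rw [this]; positivity
  have hSm0 : 0 ≤ Sm := Finset.sum_nonneg fun S _ => Real.rpow_nonneg (abs_nonneg _) _
  have hM0 : 0 ≤ M := le_trans (abs_nonneg _) (le_cubeNorm_top h (fun _ => false))
  rcases eq_or_lt_of_le hSm0 with h0 | hSmpos
  · rw [← h0, Real.zero_rpow (div_pos hd2pos hdpos).ne']
    exact mul_nonneg hB.le hM0
  set A := Finset.filter (fun S : Finset (Fin n) => S.card ≤ d) (Finset.univ) with hA
  set a : Finset (Fin n) → ℝ :=
    fun S => |walshCoeff h S| ^ (p-1) * Real.sign (walshCoeff h S) with ha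
  set f : (Fin n → Bool) → ℝ := fun x => ∑ S ∈ A, a S * walsh n S x with hf
  have hfc : ∀ T, walshCoeff f T = if T ∈ A then a T else 0 := walshCoeff_sum A a
  have hax : ∀ S : Finset (Fin n), a S * walshCoeff h S = |walshCoeff h S| ^ p := by
    intro S
    by_cases hz : walshCoeff h S = 0
    · rw [hz, mul_zero, abs_zero, Real.zero_rpow hppos.ne']
    · have habs : 0 < |walshCoeff h S| := abs_pos.mpr hz
      have hsign : Real.sign (walshCoeff h S) * walshCoeff h S = |walshCoeff h S| := by
        rcases lt_or_gt_of_ne hz with hlt | hgt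
        · rw [Real.sign_of_neg hlt, abs_of_neg hlt]; ring
        · rw [Real.sign_of_pos hgt, abs_of_pos hgt]; ring
      calc a S * walshCoeff h S
          = |walshCoeff h S|^(p-1) * (Real.sign (walshCoeff h S) * walshCoeff h S) := by
            rw [ha]; ring
        _ = |walshCoeff h S|^(p-1) * |walshCoeff h S|^(1:ℝ) := by rw [hsign, Real.rpow_one]
        _ = |walshCoeff h S| ^ p := by rw [← Real.rpow_add habs]; ring_nf
  have haabs : ∀ S, |a S| = |walshCoeff h S| ^ (p-1) := by
    intro S
    by_cases hz : walshCoeff h S = 0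
    · simp [ha, hz, Real.sign_zero, Real.zero_rpow hpm1.ne']
    · rw [ha]
      simp only []
      rw [abs_mul, abs_of_nonneg (Real.rpow_nonneg (abs_nonneg _) _)]
      have hs1 : |Real.sign (walshCoeff h S)| = 1 := by
        rcases lt_or_gt_of_ne hz with hlt | hgt
        · rw [Real.sign_of_neg hlt]; norm_num
        · rw [Real.sign_of_pos hgt]; norm_num
      rw [hs1, mul_one]
  have haq : ∀ S, |a S| ^ q = |walshCoeff h S| ^ p := by
    intro S
    rw [haabs S, ← Real.rpow_mul (abs_nonneg _)]
    congr 1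
    rw [hp, hq]
    field_simp
    ring
  have hsub : ∑ S ∈ A, |walshCoeff h S| ^ p = Sm := by
    rw [hSmdef]
    apply Finset.sum_subset (Finset.subset_univ A)
    intro S _ hS
    have hc : ¬ S.card ≤ d := by simpa [hA] using hS
    have hmem : S.card ∉ {j | j ≤ d} := by simp only [Set.mem_setOf_eq]; exact hc
    rw [hspec S hmem, abs_zero, Real.zero_rpow hppos.ne']
  have hfq : ∑ S ∈ A, |walshCoeff f S| ^ q = Sm := by
    rw [Finset.sum_congr rfl (fun S hS => by rw [hfc S, if_pos hS, haq])]
    exact hsub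
  have hEfh : (∑ x : Fin n → Bool, f x * h x) / 2 ^ n = Sm := by
    rw [parseval]
    have key : ∀ S : Finset (Fin n), walshCoeff f S * walshCoeff h S
        = if S ∈ A then |walshCoeff h S| ^ p else 0 := by
      intro S
      rw [hfc S]
      split
      · exact hax S
      · rw [zero_mul]
    simp only [key]
    rw [Finset.sum_ite_mem, Finset.univ_inter]
    exact hsub
  have hzero_spec : spectrumIn (fun _ : Fin n → Bool => (0:ℝ)) {j | d < j} := by
    intro S _
    simp [walshCoeff]
  have hTne : {t : ℝ | ∃ g : (Fin n → Bool) → ℝ,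
      spectrumIn g {j | d < j} ∧ t = cubeNorm 1 (fun x => f x - g x)}.Nonempty :=
    ⟨_, ⟨fun _ => 0, hzero_spec, rfl⟩⟩
  have hlb : ∀ t ∈ {t : ℝ | ∃ g : (Fin n → Bool) → ℝ,
      spectrumIn g {j | d < j} ∧ t = cubeNorm 1 (fun x => f x - g x)}, Sm ≤ M * t := by
    rintro t ⟨g, hg, rfl⟩
    have hgh : (∑ x : Fin n → Bool, g x * h x) / 2^n = 0 := by
      rw [parseval]
      apply Finset.sum_eq_zero
      intro S _
      by_cases hc : S.card ≤ d
      · have hmem : S.card ∉ {j | d < j} := by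
          simp only [Set.mem_setOf_eq, not_lt]; exact hc
        rw [hg S hmem, zero_mul]
      · have hmem : S.card ∉ {j | j ≤ d} := by simp only [Set.mem_setOf_eq]; exact hc
        rw [hspec S hmem, mul_zero]
    have hSmeq : Sm = (∑ x : Fin n → Bool, (f x - g x) * h x) / 2^n := by
      have hsplit : (∑ x : Fin n → Bool, (f x - g x) * h x)
          = (∑ x : Fin n → Bool, f x * h x) - (∑ x : Fin n → Bool, g x * h x) := by
        rw [← Finset.sum_sub_distrib]
        exact Finset.sum_congr rfl (fun x _ => by ring)
      rw [hsplit, sub_div, hEfh, hgh, sub_zero]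
    rw [hSmeq]
    calc (∑ x : Fin n → Bool, (f x - g x) * h x)/2^n
        ≤ |(∑ x : Fin n → Bool, (f x - g x) * h x)/2^n| := le_abs_self _
      _ ≤ cubeNorm 1 (fun x => f x - g x) * M := abs_mean_le _ h
      _ = M * cubeNorm 1 (fun x => f x - g x) := mul_comm _ _
  have hMpos : 0 < M := by
    rcases lt_or_eq_of_le hM0 with hlt | heq
    · exact hlt
    · exfalso
      obtain ⟨t0, ht0⟩ := hTne
      have := hlb t0 ht0
      rw [← heq, zero_mul] at this
      linarith
  have hdistle : Sm / M ≤ distFromTail d 1 f := by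
    apply le_csInf hTne
    intro t ht
    rw [div_le_iff₀ hMpos]
    calc Sm ≤ M * t := hlb t ht
      _ = t * M := mul_comm _ _
  have hdual' := hdual n hn f
  rw [← hA, hfq] at hdual'
  have hkey : Sm ≤ B * Sm ^ (((d:ℝ)-1)/(2*(d:ℝ))) * M :=
    (div_le_iff₀ hMpos).mp (le_trans hdistle hdual')
  have hsplit : ((d:ℝ)+1)/(2*(d:ℝ)) = 1 - ((d:ℝ)-1)/(2*(d:ℝ)) := by
    field_simp
    ring
  rw [hsplit, Real.rpow_sub hSmpos, Real.rpow_one,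
    div_le_iff₀ (Real.rpow_pos_of_pos hSmpos _)]
  calc Sm ≤ B * Sm ^ (((d:ℝ)-1)/(2*(d:ℝ))) * M := hkey
    _ = B * M * Sm ^ (((d:ℝ)-1)/(2*(d:ℝ))) := by ring
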